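/- For β ∈ ℝ with |β| ≥ 1/2 and r > 0, the modified Bessel function of the second kind satisfies √(π/2) r^{-1/2} e^{-r} ≤ K_β(r) ≤ √(2π) r^{-1/2} e^{-r} e^{β²/(2r)}. -/

import Mathlib

open Filter Real

noncomputable section

open MeasureTheory

-- cosh t ≥ 1 + t^2/2
lemma cosh_quad_lb (t : ℝ) : 1 + t ^ 2 / 2 ≤ Real.cosh t := by
  have h1 : Real.cosh t = 2 * Real.sinh (t / 2) ^ 2 + 1 := by
    have h2 : Real.cosh (2 * (t / 2)) = Real.cosh (t / 2) ^ 2 + Real.sinh (t / 2) ^ 2 :=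
      Real.cosh_two_mul _
    have h3 : Real.cosh (t / 2) ^ 2 = Real.sinh (t / 2) ^ 2 + 1 := Real.cosh_sq _
    have : (2 : ℝ) * (t / 2) = t := by ring
    rw [this] at h2; rw [h2, h3]; ring
  have h3 : (t / 2) ^ 2 ≤ Real.sinh (t / 2) ^ 2 := by
    rcases le_total 0 t with h | h
    · have := Real.self_le_sinh_iff.mpr (by linarith : (0:ℝ) ≤ t / 2)
      nlinarith
    · have h4 : Real.sinh (t / 2) ≤ t / 2 := by
        have := Real.self_le_sinh_iff.mpr (by linarith : (0:ℝ) ≤ -(t / 2))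
        have hneg := Real.sinh_neg (t / 2)
        nlinarith [Real.sinh_neg (t/2)]
      nlinarith
  nlinarith

lemma upper_pt (β r t : ℝ) (hr : 0 < r) :
    Real.exp (-r * Real.cosh t) * Real.exp (β * t) ≤
      Real.exp (-r) * Real.exp (β ^ 2 / (2 * r)) * Real.exp (-(r / 2) * (t - β / r) ^ 2) := by
  rw [← Real.exp_add, ← Real.exp_add, ← Real.exp_add]
  apply Real.exp_le_exp.mpr
  have key : -r + β ^ 2 / (2 * r) + -(r / 2) * (t - β / r) ^ 2 = -r - r * t ^ 2 / 2 + β * t := by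
    field_simp; ring
  have := cosh_quad_lb t
  nlinarith [hr.le]

lemma integ_f (β r : ℝ) (hr : 0 < r) :
    Integrable (fun t : ℝ => Real.exp (-r * Real.cosh t) * Real.exp (β * t)) := by
  have hg : Integrable (fun t : ℝ =>
      Real.exp (-r) * Real.exp (β ^ 2 / (2 * r)) * Real.exp (-(r / 2) * (t - β / r) ^ 2)) := by
    exact (((integrable_exp_neg_mul_sq (by positivity : (0:ℝ) < r / 2)).comp_sub_right
      (β / r)).const_mul _)
  refine hg.mono' ?_ ?_
  · exact (Continuous.mul (by continuity) (by continuity)).aestronglyMeasurable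
  · filter_upwards with t
    rw [Real.norm_eq_abs, abs_of_nonneg (by positivity)]
    exact upper_pt β r t hr

lemma subst_sinh (r : ℝ) (hr : 0 < r) :
    ∫ t : ℝ, Real.cosh (t / 2) * (1 / 2) * Real.exp (-(2 * r) * Real.sinh (t / 2) ^ 2)
      = Real.sqrt (π / (2 * r)) := by
  have hφ' : ∀ x ∈ (Set.univ : Set ℝ), HasDerivWithinAt (fun t => Real.sinh (t / 2))
      (Real.cosh (x / 2) * (1 / 2)) Set.univ x := by
    intro x _
    have h1 : HasDerivAt (fun t : ℝ => t / 2) (1 / 2) x := by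
      simpa using (hasDerivAt_id x).div_const 2
    have := (Real.hasDerivAt_sinh (x / 2)).comp x h1
    exact this.hasDerivWithinAt
  have hinj : Set.InjOn (fun t => Real.sinh (t / 2)) Set.univ := by
    intro a _ b _ h
    have := Real.sinh_injective h
    linarith
  have himg : (fun t => Real.sinh (t / 2)) '' Set.univ = Set.univ := by
    rw [Set.image_univ]
    exact Set.range_eq_univ.mpr fun y => ⟨2 * Real.arsinh y, by
      simp [Real.sinh_arsinh]⟩
  have h := integral_image_eq_integral_abs_deriv_smul MeasurableSet.univ hφ' hinj
    (fun u => Real.exp (-(2 * r) * u ^ 2))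
  rw [himg, Measure.restrict_univ] at h
  rw [integral_gaussian] at h
  rw [h]
  congr 1
  ext t
  rw [smul_eq_mul, abs_of_nonneg (by positivity)]

lemma sym_eq (β r : ℝ) (hr : 0 < r) :
    (∫ t : ℝ, Real.exp (-r * Real.cosh t) * Real.exp (β * t)) =
      ∫ t : ℝ, Real.exp (-r * Real.cosh t) * Real.cosh (β * t) := by
  have hneg : (∫ t : ℝ, Real.exp (-r * Real.cosh t) * Real.exp (-β * t)) =
      ∫ t : ℝ, Real.exp (-r * Real.cosh t) * Real.exp (β * t) := by
    have h := integral_neg_eq_self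
      (fun t : ℝ => Real.exp (-r * Real.cosh t) * Real.exp (β * t)) volume
    simp only [Real.cosh_neg, mul_neg, neg_mul] at h ⊢
    exact h
  have e : (fun t : ℝ => Real.exp (-r * Real.cosh t) * Real.cosh (β * t)) =
      fun t : ℝ => (Real.exp (-r * Real.cosh t) * Real.exp (β * t)
        + Real.exp (-r * Real.cosh t) * Real.exp (-β * t)) / 2 := by
    funext t
    rw [Real.cosh_eq (β * t)]
    ring
  rw [e, integral_div, integral_add (integ_f β r hr) (integ_f (-β) r hr), hneg]
  ring

lemma cosh_half_sq (t : ℝ) : Real.cosh t = 2 * Real.sinh (t / 2) ^ 2 + 1 := by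
  have h2 : Real.cosh (2 * (t / 2)) = Real.cosh (t / 2) ^ 2 + Real.sinh (t / 2) ^ 2 :=
    Real.cosh_two_mul _
  have h3 : Real.cosh (t / 2) ^ 2 = Real.sinh (t / 2) ^ 2 + 1 := Real.cosh_sq _
  have h4 : (2 : ℝ) * (t / 2) = t := by ring
  rw [h4] at h2; rw [h2, h3]; ring

lemma gauss_shift (β r : ℝ) (hr : 0 < r) :
    ∫ t : ℝ, Real.exp (-(r / 2) * (t - β / r) ^ 2) = Real.sqrt (π / (r / 2)) := by
  rw [integral_sub_right_eq_self (fun t => Real.exp (-(r / 2) * t ^ 2)) (β / r)]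
  exact integral_gaussian _

/-- The modified Bessel function of the second kind,
`K_β(r) = (1/2) ∫_ℝ e^{-r cosh t} e^{βt} dt`. -/
def besselK (β r : ℝ) : ℝ :=
  (1 / 2) * ∫ t : ℝ, Real.exp (-r * Real.cosh t) * Real.exp (β * t)

/-- Two-sided bound for the modified Bessel function of the second kind: for `|β| ≥ 1/2`
and `r > 0`, `√(π/2) r^{-1/2} e^{-r} ≤ K_β(r) ≤ √(2π) r^{-1/2} e^{-r} e^{β²/(2r)}`. -/
theorem stmt18 (β r : ℝ) (hβ : 1 / 2 ≤ |β|) (hr : 0 < r) :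
    Real.sqrt (π / 2) * r ^ (-(1 : ℝ) / 2) * Real.exp (-r) ≤ besselK β r ∧
    besselK β r ≤
      Real.sqrt (2 * π) * r ^ (-(1 : ℝ) / 2) * Real.exp (-r) * Real.exp (β ^ 2 / (2 * r)) := by
  have hrp : r ^ (-(1 : ℝ) / 2) = (Real.sqrt r)⁻¹ := by
    rw [show (-(1 : ℝ) / 2) = -(1 / 2 : ℝ) by norm_num, Real.rpow_neg hr.le,
      ← Real.sqrt_eq_rpow]
  have hsr : (0 : ℝ) < Real.sqrt r := Real.sqrt_pos.mpr hr
  constructor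
  · -- lower bound
    have hlow_pt : ∀ t : ℝ,
        Real.exp (-r) * (2 * (Real.cosh (t / 2) * (1 / 2) *
          Real.exp (-(2 * r) * Real.sinh (t / 2) ^ 2)))
          ≤ Real.exp (-r * Real.cosh t) * Real.cosh (β * t) := by
      intro t
      have hc : Real.exp (-r) * Real.exp (-(2 * r) * Real.sinh (t / 2) ^ 2) =
          Real.exp (-r * Real.cosh t) := by
        rw [← Real.exp_add]; congr 1
        rw [cosh_half_sq t]; ring
      have hm : Real.cosh (t / 2) ≤ Real.cosh (β * t) := by
        apply Real.cosh_le_cosh.mpr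
        rw [abs_mul, abs_div, abs_two]
        calc |t| / 2 = (1 / 2) * |t| := by ring
          _ ≤ |β| * |t| := mul_le_mul_of_nonneg_right hβ (abs_nonneg t)
      calc Real.exp (-r) * (2 * (Real.cosh (t / 2) * (1 / 2) *
            Real.exp (-(2 * r) * Real.sinh (t / 2) ^ 2)))
          = Real.exp (-r * Real.cosh t) * Real.cosh (t / 2) := by rw [← hc]; ring
        _ ≤ Real.exp (-r * Real.cosh t) * Real.cosh (β * t) :=
            mul_le_mul_of_nonneg_left hm (Real.exp_pos _).le
    have hint : Integrable (fun t : ℝ => Real.exp (-r * Real.cosh t) * Real.cosh (β * t)) := by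
      rw [show (fun t : ℝ => Real.exp (-r * Real.cosh t) * Real.cosh (β * t)) =
          fun t : ℝ => (Real.exp (-r * Real.cosh t) * Real.exp (β * t)
            + Real.exp (-r * Real.cosh t) * Real.exp (-β * t)) / 2 from
        funext fun t => by rw [Real.cosh_eq (β * t)]; ring]
      exact ((integ_f β r hr).add (integ_f (-β) r hr)).div_const 2
    have hmono : (∫ t : ℝ, Real.exp (-r) * (2 * (Real.cosh (t / 2) * (1 / 2) *
        Real.exp (-(2 * r) * Real.sinh (t / 2) ^ 2))))
        ≤ ∫ t : ℝ, Real.exp (-r * Real.cosh t) * Real.cosh (β * t) := by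
      apply integral_mono_of_nonneg
      · filter_upwards with t; positivity
      · exact hint
      · filter_upwards with t; exact hlow_pt t
    have hval : (∫ t : ℝ, Real.exp (-r) * (2 * (Real.cosh (t / 2) * (1 / 2) *
        Real.exp (-(2 * r) * Real.sinh (t / 2) ^ 2))))
        = Real.exp (-r) * (2 * Real.sqrt (π / (2 * r))) := by
      rw [integral_const_mul, integral_const_mul, subst_sinh r hr]
    have hsq : Real.sqrt (π / (2 * r)) = Real.sqrt (π / 2) * (Real.sqrt r)⁻¹ := by
      rw [show π / (2 * r) = (π / 2) / r by ring, Real.sqrt_div (by positivity) r,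
        div_eq_mul_inv]
    rw [besselK, sym_eq β r hr, hrp]
    calc Real.sqrt (π / 2) * (Real.sqrt r)⁻¹ * Real.exp (-r)
        = (1 / 2) * (Real.exp (-r) * (2 * Real.sqrt (π / (2 * r)))) := by
          rw [hsq]; ring
      _ ≤ (1 / 2) * ∫ t : ℝ, Real.exp (-r * Real.cosh t) * Real.cosh (β * t) := by
          rw [← hval]; linarith [hmono]
  · -- upper bound
    have hgint : Integrable (fun t : ℝ => Real.exp (-r) * Real.exp (β ^ 2 / (2 * r)) *
        Real.exp (-(r / 2) * (t - β / r) ^ 2)) :=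
      (((integrable_exp_neg_mul_sq (by positivity : (0:ℝ) < r / 2)).comp_sub_right
        (β / r)).const_mul _)
    have hmono : (∫ t : ℝ, Real.exp (-r * Real.cosh t) * Real.exp (β * t))
        ≤ ∫ t : ℝ, Real.exp (-r) * Real.exp (β ^ 2 / (2 * r)) *
          Real.exp (-(r / 2) * (t - β / r) ^ 2) := by
      apply integral_mono_of_nonneg
      · filter_upwards with t; positivity
      · exact hgint
      · filter_upwards with t; exact upper_pt β r t hr
    have hval : (∫ t : ℝ, Real.exp (-r) * Real.exp (β ^ 2 / (2 * r)) *
        Real.exp (-(r / 2) * (t - β / r) ^ 2))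
        = Real.exp (-r) * Real.exp (β ^ 2 / (2 * r)) * Real.sqrt (π / (r / 2)) := by
      rw [integral_const_mul, gauss_shift β r hr]
    have hsq : Real.sqrt (π / (r / 2)) = Real.sqrt (2 * π) * (Real.sqrt r)⁻¹ := by
      rw [show π / (r / 2) = (2 * π) / r by field_simp, Real.sqrt_div (by positivity) r,
        div_eq_mul_inv]
    rw [besselK, hrp]
    calc (1 / 2) * ∫ t : ℝ, Real.exp (-r * Real.cosh t) * Real.exp (β * t)
        ≤ (1 / 2) * (Real.exp (-r) * Real.exp (β ^ 2 / (2 * r)) * Real.sqrt (π / (r / 2))) := by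
          rw [← hval]; linarith [hmono]
      _ ≤ Real.sqrt (2 * π) * (Real.sqrt r)⁻¹ * Real.exp (-r) * Real.exp (β ^ 2 / (2 * r)) := by
          rw [hsq]
          have h1 : (0:ℝ) ≤ Real.sqrt (2 * π) * (Real.sqrt r)⁻¹ * Real.exp (-r) *
            Real.exp (β ^ 2 / (2 * r)) := by positivity
          nlinarith [h1]

end
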